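/- Let H be a Hermitian matrix on ℂ^d with orthonormal eigenbasis {|j⟩}_{j=1}^d and corresponding eigenvalues {e_j} that are pairwise distinct. Then for any matrix B on ℂ^d and any unit vector |ψ⟩, the time average lim_{T→∞} (1/T) ∫₀^T ⟨ψ| e^{iHt} B e^{−iHt} |ψ⟩ dt exists and equals Σ_{j=1}^d |⟨j|ψ⟩|² ⟨j|B|j⟩. -/

import Mathlib

open scoped Matrix

attribute [local instance] Matrix.linftyOpNormedRing Matrix.linftyOpNormedAlgebra

theorem exp_mulVec_eig {d : ℕ} (A : Matrix (Fin d) (Fin d) ℂ) (w : Fin d → ℂ) (μ : ℂ)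
    (h : A.mulVec w = μ • w) :
    (NormedSpace.exp A).mulVec w = Complex.exp μ • w := by
  have hpow : ∀ n : ℕ, (A ^ n).mulVec w = μ ^ n • w := by
    intro n
    induction n with
    | zero => simp [Matrix.one_mulVec]
    | succ n ih =>
      rw [pow_succ, ← Matrix.mulVec_mulVec, h, Matrix.mulVec_smul, ih, smul_smul, pow_succ, mul_comm]
  let L : Matrix (Fin d) (Fin d) ℂ →L[ℂ] (Fin d → ℂ) :=
    LinearMap.toContinuousLinearMap
      { toFun := fun M => M.mulVec w
        map_add' := fun M N => Matrix.add_mulVec M N w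
        map_smul' := fun c M => Matrix.smul_mulVec c M w }
  have hL : ∀ M : Matrix (Fin d) (Fin d) ℂ, L M = M.mulVec w := fun _ => rfl
  rw [NormedSpace.exp_eq_tsum (𝕂 := ℂ), ← hL, L.map_tsum (NormedSpace.expSeries_summable' A)]
  have : ∀ n : ℕ, L (((n.factorial : ℂ))⁻¹ • A ^ n) = (((n.factorial : ℂ))⁻¹ * μ ^ n) • w := by
    intro n
    rw [map_smul, hL, hpow, smul_smul]
  simp_rw [this]
  have hs : Summable fun n : ℕ => ((n.factorial : ℂ))⁻¹ * μ ^ n := by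
    simpa [smul_eq_mul] using NormedSpace.expSeries_summable' (𝕂 := ℂ) μ
  rw [hs.tsum_smul_const]
  congr 1
  rw [Complex.exp_eq_exp_ℂ, NormedSpace.exp_eq_tsum (𝕂 := ℂ)]
  simp [smul_eq_mul]

theorem onb_complete {d : ℕ} (v : Fin d → (Fin d → ℂ))
    (hv : ∀ j k, star (v j) ⬝ᵥ v k = if j = k then 1 else 0)
    (ψ : Fin d → ℂ) : ψ = ∑ j, (star (v j) ⬝ᵥ ψ) • v j := by
  set V : Matrix (Fin d) (Fin d) ℂ := Matrix.of fun i j => v j i with hV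
  have h1 : Vᴴ * V = 1 := by
    ext j k
    simp only [Matrix.mul_apply, Matrix.conjTranspose_apply, hV, Matrix.of_apply]
    simpa [dotProduct, Matrix.one_apply] using hv j k
  have h2 : V * Vᴴ = 1 := mul_eq_one_comm.mp h1
  have := congrArg (fun M => M.mulVec ψ) h2
  simp only [Matrix.one_mulVec] at this
  conv_lhs => rw [← this]
  funext i
  rw [← Matrix.mulVec_mulVec]
  simp only [Matrix.mulVec, dotProduct, Finset.sum_apply, Pi.smul_apply,
    Matrix.conjTranspose_apply, hV, Matrix.of_apply, smul_eq_mul]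
  refine Finset.sum_congr rfl fun j _ => ?_
  simp [dotProduct, Finset.mul_sum, mul_comm, Pi.star_apply]

theorem aux_tendsto (a : ℂ) (ω : ℝ) :
    Filter.Tendsto (fun T : ℝ => (T : ℂ)⁻¹ * ∫ t in (0:ℝ)..T,
        a * Complex.exp ((Complex.I * (ω : ℂ)) * t))
      Filter.atTop (nhds (if ω = 0 then a else 0)) := by
  by_cases hω : ω = 0
  · rw [if_pos hω]
    subst hω
    refine Filter.Tendsto.congr' ?_ (tendsto_const_nhds (x := a))
    filter_upwards [Filter.eventually_ge_atTop (1:ℝ)] with T hT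
    have hT0 : (T:ℂ) ≠ 0 := by
      exact_mod_cast ne_of_gt (lt_of_lt_of_le one_pos hT)
    simp only [Complex.ofReal_zero, mul_zero, zero_mul, Complex.exp_zero, mul_one,
      intervalIntegral.integral_const, sub_zero, Complex.real_smul]
    field_simp
  · rw [if_neg hω]
    set c' : ℂ := Complex.I * (ω : ℂ) with hc'def
    have hc' : c' ≠ 0 := mul_ne_zero Complex.I_ne_zero (by exact_mod_cast hω)
    have hint : ∀ T : ℝ, (∫ t in (0:ℝ)..T, a * Complex.exp (c' * t))
        = a * ((Complex.exp (c' * T) - 1) / c') := by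
      intro T
      rw [intervalIntegral.integral_const_mul, integral_exp_mul_complex hc']
      simp
    have hb : Filter.Tendsto (fun T : ℝ => (‖a‖ * 2 / ‖c'‖) * T⁻¹) Filter.atTop (nhds 0) := by
      simpa using tendsto_inv_atTop_zero.const_mul (‖a‖ * 2 / ‖c'‖)
    refine squeeze_zero_norm' ?_ hb
    · filter_upwards [Filter.eventually_ge_atTop (1:ℝ)] with T hT
      have hT0 : (0:ℝ) < T := lt_of_lt_of_le one_pos hT
      have hnormexp : ‖Complex.exp (c' * T)‖ = 1 := by
        rw [Complex.norm_exp]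
        have : (c' * T).re = 0 := by
          simp [hc'def, Complex.mul_re, Complex.mul_im]
        rw [this, Real.exp_zero]
      have h2 : ‖Complex.exp (c' * T) - 1‖ ≤ 2 := by
        calc ‖Complex.exp (c' * T) - 1‖ ≤ ‖Complex.exp (c' * T)‖ + ‖(1:ℂ)‖ := norm_sub_le _ _
          _ = 2 := by rw [hnormexp]; norm_num
      rw [hint, norm_mul, norm_mul, norm_div, norm_inv]
      have h1 : ‖(T:ℂ)‖ = T := by
        rw [Complex.norm_real, Real.norm_eq_abs, abs_of_pos hT0]
      rw [h1]
      have hle : T⁻¹ * (‖a‖ * (‖Complex.exp (c' * T) - 1‖ / ‖c'‖))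
          ≤ T⁻¹ * (‖a‖ * (2 / ‖c'‖)) := by
        gcongr
      calc T⁻¹ * (‖a‖ * (‖Complex.exp (c' * T) - 1‖ / ‖c'‖))
          ≤ T⁻¹ * (‖a‖ * (2 / ‖c'‖)) := hle
        _ = ‖a‖ * 2 / ‖c'‖ * T⁻¹ := by ring

theorem integrand_eq (d : ℕ)
    (H : Matrix (Fin d) (Fin d) ℂ) (hH : H.IsHermitian)
    (v : Fin d → (Fin d → ℂ))
    (hv : ∀ j k, star (v j) ⬝ᵥ v k = if j = k then 1 else 0)
    (e : Fin d → ℝ) (heig : ∀ j, H.mulVec (v j) = (e j : ℂ) • v j)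
    (B : Matrix (Fin d) (Fin d) ℂ) (ψ : Fin d → ℂ) (t : ℝ) :
    star ψ ⬝ᵥ ((NormedSpace.exp ((Complex.I * t) • H) * B *
          NormedSpace.exp (-((Complex.I * t) • H))).mulVec ψ)
    = ∑ p : Fin d × Fin d, ((starRingEnd ℂ) (star (v p.1) ⬝ᵥ ψ) * (star (v p.2) ⬝ᵥ ψ) *
        (star (v p.1) ⬝ᵥ B.mulVec (v p.2))) *
        Complex.exp ((Complex.I * ((e p.1 - e p.2 : ℝ) : ℂ)) * t) := by
  rw [Fintype.sum_prod_type]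
  simp_rw [Complex.ofReal_sub]
  set c : Fin d → ℂ := fun j => star (v j) ⬝ᵥ ψ with hc
  have hφ : (NormedSpace.exp (-((Complex.I * t) • H))) *ᵥ ψ
      = ∑ k, (c k * Complex.exp (-(Complex.I * (e k) * t))) • v k := by
    conv_lhs => rw [onb_complete v hv ψ]
    rw [show ∀ x, (NormedSpace.exp (-((Complex.I * t) • H))) *ᵥ x
        = (NormedSpace.exp (-((Complex.I * t) • H))).mulVecLin x from fun _ => rfl, map_sum]
    refine Finset.sum_congr rfl fun k _ => ?_
    rw [LinearMap.map_smul, Matrix.mulVecLin_apply,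
      exp_mulVec_eig _ _ (-(Complex.I * (e k) * t)) ?_, smul_smul, mul_comm]
    rw [Matrix.neg_mulVec, Matrix.smul_mulVec, heig, smul_smul]
    rw [← neg_smul]
    ring_nf
  have hE : (NormedSpace.exp ((Complex.I * t) • H))
      = (NormedSpace.exp (-((Complex.I * t) • H)))ᴴ := by
    rw [← Matrix.exp_conjTranspose]
    congr 1
    rw [Matrix.conjTranspose_neg, Matrix.conjTranspose_smul, hH.eq]
    simp [Complex.star_def, map_mul, Complex.conj_I, Complex.conj_ofReal, neg_smul]
  have hsum1 : ∀ (x : Fin d → Fin d → ℂ) (y : Fin d → ℂ),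
      (∑ j, x j) ⬝ᵥ y = ∑ j, x j ⬝ᵥ y := by
    intro x y
    simp only [dotProduct, Finset.sum_apply, Finset.sum_mul]
    exact Finset.sum_comm
  have hsum2 : ∀ (x : Fin d → ℂ) (y : Fin d → Fin d → ℂ),
      x ⬝ᵥ (∑ k, y k) = ∑ k, x ⬝ᵥ y k := by
    intro x y
    simp only [dotProduct, Finset.sum_apply, Finset.mul_sum]
    exact Finset.sum_comm
  rw [← Matrix.mulVec_mulVec, ← Matrix.mulVec_mulVec, Matrix.dotProduct_mulVec, hE,
    ← Matrix.star_mulVec, hφ]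
  rw [show (B *ᵥ ∑ k, (c k * Complex.exp (-(Complex.I * ↑(e k) * ↑t))) • v k)
      = ∑ k, (c k * Complex.exp (-(Complex.I * ↑(e k) * ↑t))) • (B *ᵥ v k) by
    rw [show ∀ x, B *ᵥ x = B.mulVecLin x from fun _ => rfl, map_sum]
    simp [Matrix.mulVecLin_apply, Matrix.mulVec_smul]]
  rw [star_sum]
  simp only [star_smul]
  rw [hsum1]
  refine Finset.sum_congr rfl fun j _ => ?_
  rw [smul_dotProduct, hsum2, Finset.smul_sum]
  refine Finset.sum_congr rfl fun k _ => ?_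
  rw [dotProduct_smul]
  have hstar : star (c j * Complex.exp (-(Complex.I * ↑(e j) * ↑t)))
      = (starRingEnd ℂ) (c j) * Complex.exp (Complex.I * ↑(e j) * ↑t) := by
    rw [Complex.star_def, map_mul, ← Complex.exp_conj]
    congr 2
    simp [map_mul, Complex.conj_I, Complex.conj_ofReal]
  have hexp : Complex.exp (Complex.I * ↑(e j) * ↑t) * Complex.exp (-(Complex.I * ↑(e k) * ↑t))
      = Complex.exp ((Complex.I * ((e j : ℂ) - e k)) * t) := by
    rw [← Complex.exp_add]
    ring_nf
  rw [hstar]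
  simp only [smul_eq_mul]
  rw [← hexp]
  ring

/-- Let `H` be a Hermitian matrix on `ℂ^d` with orthonormal eigenbasis `{|j⟩}` and pairwise
distinct eigenvalues `{e_j}`. Then for any matrix `B` and any unit vector `|ψ⟩`, the time
average `lim_{T→∞} (1/T) ∫₀^T ⟨ψ| e^{iHt} B e^{−iHt} |ψ⟩ dt` exists and equals
`Σ_j |⟨j|ψ⟩|² ⟨j|B|j⟩`. -/
theorem time_average_expectation (d : ℕ)
    (H : Matrix (Fin d) (Fin d) ℂ) (hH : H.IsHermitian)
    (v : Fin d → (Fin d → ℂ))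
    (hv : ∀ j k, star (v j) ⬝ᵥ v k = if j = k then 1 else 0)
    (e : Fin d → ℝ) (heig : ∀ j, H.mulVec (v j) = (e j : ℂ) • v j)
    (hdist : Function.Injective e)
    (B : Matrix (Fin d) (Fin d) ℂ) (ψ : Fin d → ℂ) (hψ : star ψ ⬝ᵥ ψ = 1) :
    Filter.Tendsto
      (fun T : ℝ => (T : ℂ)⁻¹ * ∫ t in (0 : ℝ)..T,
        star ψ ⬝ᵥ ((NormedSpace.exp ((Complex.I * t) • H) * B *
          NormedSpace.exp (-((Complex.I * t) • H))).mulVec ψ))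
      Filter.atTop
      (nhds (∑ j, (‖star (v j) ⬝ᵥ ψ‖ : ℂ) ^ 2 * (star (v j) ⬝ᵥ B.mulVec (v j)))) := by
  set a : Fin d × Fin d → ℂ := fun p =>
    (starRingEnd ℂ) (star (v p.1) ⬝ᵥ ψ) * (star (v p.2) ⬝ᵥ ψ) *
      (star (v p.1) ⬝ᵥ B.mulVec (v p.2)) with ha
  have hcont : ∀ p : Fin d × Fin d,
      Continuous fun t : ℝ => a p * Complex.exp ((Complex.I * ((e p.1 - e p.2 : ℝ) : ℂ)) * t) :=
    fun p => continuous_const.mul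
      (Complex.continuous_exp.comp (continuous_const.mul Complex.continuous_ofReal))
  have hfun : ∀ T : ℝ,
      ((T : ℂ)⁻¹ * ∫ t in (0 : ℝ)..T,
        star ψ ⬝ᵥ ((NormedSpace.exp ((Complex.I * t) • H) * B *
          NormedSpace.exp (-((Complex.I * t) • H))).mulVec ψ))
      = ∑ p : Fin d × Fin d, (T : ℂ)⁻¹ * ∫ t in (0 : ℝ)..T,
          a p * Complex.exp ((Complex.I * ((e p.1 - e p.2 : ℝ) : ℂ)) * t) := by
    intro T
    have hi : (∫ t in (0:ℝ)..T,
        star ψ ⬝ᵥ ((NormedSpace.exp ((Complex.I * t) • H) * B *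
          NormedSpace.exp (-((Complex.I * t) • H))).mulVec ψ))
        = ∑ p : Fin d × Fin d, ∫ t in (0:ℝ)..T,
            a p * Complex.exp ((Complex.I * ((e p.1 - e p.2 : ℝ) : ℂ)) * t) := by
      rw [intervalIntegral.integral_congr
        (g := fun t => ∑ p : Fin d × Fin d,
          a p * Complex.exp ((Complex.I * ((e p.1 - e p.2 : ℝ) : ℂ)) * t))
        (fun t _ => integrand_eq d H hH v hv e heig B ψ t)]
      exact intervalIntegral.integral_finset_sum
        (fun p _ => (hcont p).intervalIntegrable _ _)
    rw [hi, Finset.mul_sum]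
  have hlim := tendsto_finset_sum (Finset.univ : Finset (Fin d × Fin d))
    (fun p _ => aux_tendsto (a p) (e p.1 - e p.2))
  have hval : (∑ p : Fin d × Fin d, if e p.1 - e p.2 = 0 then a p else 0)
      = ∑ j, (‖star (v j) ⬝ᵥ ψ‖ : ℂ) ^ 2 * (star (v j) ⬝ᵥ B.mulVec (v j)) := by
    rw [show (∑ p : Fin d × Fin d, if e p.1 - e p.2 = 0 then a p else 0)
        = ∑ p : Fin d × Fin d, if p.1 = p.2 then a p else 0 from
      Finset.sum_congr rfl fun p _ => by
        congr 1
        simp [sub_eq_zero, hdist.eq_iff]]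
    rw [Fintype.sum_prod_type]
    refine Finset.sum_congr rfl fun j _ => ?_
    rw [Finset.sum_ite_eq (Finset.univ : Finset (Fin d)) j (fun k => a (j, k))]
    simp only [Finset.mem_univ, if_true, ha]
    have : ((‖star (v j) ⬝ᵥ ψ‖ : ℝ) : ℂ) ^ 2
        = (starRingEnd ℂ) (star (v j) ⬝ᵥ ψ) * (star (v j) ⬝ᵥ ψ) := by
      rw [← Complex.ofReal_pow, Complex.sq_norm,
        Complex.normSq_eq_conj_mul_self]
    rw [this, mul_assoc]
  rw [← hval]
  exact hlim.congr (fun T => (hfun T).symm)
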